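/- Let (X, μ) be a measure space, A a finite index set, and for each a ∈ A let E_a ⊆ X be a measurable set with 0 < μ(E_a) < ∞, let B_a ∈ L²(μ, ℝ) be a function vanishing μ-a.e. outside E_a and satisfying |B_a| ≤ 1 μ-a.e., and let Λ_a : L²(μ, ℝ) → ℝ be a linear functional satisfying |Λ_a(φ)| ≤ c · μ(E_a)^{-1/2} · ‖φ‖_{L²(E_a)} for all φ ∈ L²(μ, ℝ), for some constant c ≥ 0. Assume the supports have bounded overlap: there is an integer M ≥ 1 such that μ-almost every x ∈ X belongs to at most M of the sets E_a. Then the quasi-interpolant Π(φ) = Σ_{a ∈ A} Λ_a(φ) · B_a satisfies ‖Π(φ)‖_{L²(μ)} ≤ c · M · ‖φ‖_{L²(μ)} for all φ ∈ L²(μ, ℝ). -/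

import Mathlib

open MeasureTheory

/-- **`L²`-stability of the quasi-interpolant.** If each basis function `B a ∈ L²(μ, ℝ)` is
supported in a set `E a` of finite positive measure, is bounded by `1`, each functional `Λ a`
satisfies the local stability bound `|Λ a φ| ≤ c · μ(E a)^{-1/2} · ‖φ‖_{L²(E a)}`, and the
supports `E a` have overlap at most `M`, then the quasi-interpolant
`Π(φ) = ∑ a, Λ a (φ) • B a` satisfies `‖Π(φ)‖ ≤ c · M · ‖φ‖`. -/
theorem quasi_interpolant_L2_stability {X : Type*} [MeasurableSpace X] (μ : Measure X)
    {A : Type*} [Fintype A]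
    (E : A → Set X) (hEmeas : ∀ a, MeasurableSet (E a))
    (hEpos : ∀ a, 0 < μ (E a)) (hEfin : ∀ a, μ (E a) < ⊤)
    (B : A → Lp ℝ 2 μ)
    (hBsupp : ∀ a, ∀ᵐ x ∂μ, x ∉ E a → (B a : X → ℝ) x = 0)
    (hBbdd : ∀ a, ∀ᵐ x ∂μ, |(B a : X → ℝ) x| ≤ 1)
    (Λ : A → (Lp ℝ 2 μ →ₗ[ℝ] ℝ))
    (c : ℝ) (hc : 0 ≤ c)
    (hΛ : ∀ (a : A) (φ : Lp ℝ 2 μ),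
      |Λ a φ| ≤ c * (μ (E a)).toReal ^ (-(1 / 2 : ℝ)) *
        Real.sqrt (∫ x in E a, ((φ : X → ℝ) x) ^ 2 ∂μ))
    (M : ℕ) (hM : 1 ≤ M)
    (hoverlap : ∀ᵐ x ∂μ, Nat.card {a : A // x ∈ E a} ≤ M) :
    ∀ φ : Lp ℝ 2 μ, ‖∑ a : A, Λ a φ • B a‖ ≤ c * M * ‖φ‖ := by
  classical
  intro φ
  set l : A → ℝ := fun a => Λ a φ with hl
  set t : A → ℝ := fun a => (μ (E a)).toReal with ht
  set I : A → ℝ := fun a => ∫ x in E a, ((φ : X → ℝ) x) ^ 2 ∂μ with hI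
  set m : A → A → ℝ := fun a b => (μ (E a ∩ E b)).toReal with hm
  have htpos : ∀ a, 0 < t a := fun a =>
    ENNReal.toReal_pos (hEpos a).ne' (hEfin a).ne
  have hInonneg : ∀ a, 0 ≤ I a := fun a =>
    setIntegral_nonneg (hEmeas a) (fun x _ => sq_nonneg _)
  -- overlap count bound reformulated
  have hcount : ∀ᵐ x ∂μ, (Finset.univ.filter (fun a => x ∈ E a)).card ≤ M := by
    filter_upwards [hoverlap] with x hx
    rwa [Nat.card_eq_fintype_card, Fintype.card_subtype] at hx
  -- squared functional bound
  have hφsq_int : Integrable (fun x => ((φ : X → ℝ) x) ^ 2) μ := by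
    have := L2.integrable_inner (𝕜 := ℝ) φ φ
    simpa [pow_two] using this
  have hlsq : ∀ a, (l a) ^ 2 ≤ c ^ 2 * (t a)⁻¹ * I a := by
    intro a
    have h := hΛ a φ
    have h1 : |l a| ^ 2 ≤ (c * t a ^ (-(1 / 2 : ℝ)) * Real.sqrt (I a)) ^ 2 := by
      apply pow_le_pow_left₀ (abs_nonneg _) h 2
    rw [sq_abs] at h1
    calc (l a) ^ 2 ≤ (c * t a ^ (-(1 / 2 : ℝ)) * Real.sqrt (I a)) ^ 2 := h1
      _ = c ^ 2 * (t a ^ (-(1 / 2 : ℝ))) ^ 2 * (I a) := by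
          rw [mul_pow, mul_pow, Real.sq_sqrt (hInonneg a)]
      _ = c ^ 2 * (t a)⁻¹ * I a := by
          congr 1
          congr 1
          rw [← Real.rpow_natCast (t a ^ (-(1 / 2 : ℝ))) 2, ← Real.rpow_mul (htpos a).le]
          norm_num [Real.rpow_neg_one]
  -- inner product bound
  have hinner : ∀ a b, |(inner ℝ (B a) (B b) : ℝ)| ≤ m a b := by
    intro a b
    rw [L2.inner_def]
    have hint : Integrable (fun x => (B a : X → ℝ) x * (B b : X → ℝ) x) μ := by
      have := L2.integrable_inner (𝕜 := ℝ) (B a) (B b)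
      simpa [mul_comm] using this
    have habs : ∀ᵐ x ∂μ, |(B a : X → ℝ) x * (B b : X → ℝ) x| ≤
        (E a ∩ E b).indicator (1 : X → ℝ) x := by
      filter_upwards [hBsupp a, hBsupp b, hBbdd a, hBbdd b] with x hsa hsb hba hbb
      by_cases hx : x ∈ E a ∩ E b
      · rw [Set.indicator_of_mem hx]
        calc |(B a : X → ℝ) x * (B b : X → ℝ) x| = |(B a : X → ℝ) x| * |(B b : X → ℝ) x| :=
              abs_mul _ _
          _ ≤ 1 * 1 := mul_le_mul hba hbb (abs_nonneg _) zero_le_one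
          _ = 1 := one_mul 1
      · rw [Set.indicator_of_notMem hx]
        rcases (Set.mem_inter_iff _ _ _).not.mp hx |> not_and_or.mp with h | h
        · simp [hsa h]
        · simp [hsb h]
    simp only [show ∀ x y : ℝ, inner ℝ x y = x * y from fun x y => by simp [mul_comm]]
    show |∫ x, (B a : X → ℝ) x * (B b : X → ℝ) x ∂μ| ≤ m a b
    calc |∫ x, (B a : X → ℝ) x * (B b : X → ℝ) x ∂μ|
        ≤ ∫ x, |(B a : X → ℝ) x * (B b : X → ℝ) x| ∂μ := by
          simpa only [Real.norm_eq_abs] using norm_integral_le_integral_norm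
            (μ := μ) (fun x => (B a : X → ℝ) x * (B b : X → ℝ) x)
      _ ≤ ∫ x, (E a ∩ E b).indicator (1 : X → ℝ) x ∂μ := by
          apply integral_mono_ae hint.abs _ habs
          exact (integrable_indicator_iff ((hEmeas a).inter (hEmeas b))).mpr
            ((integrableOn_const_iff (C := (1 : ℝ))).mpr (Or.inr (lt_of_le_of_lt (measure_mono Set.inter_subset_left) (hEfin a))))
      _ = m a b := integral_indicator_one ((hEmeas a).inter (hEmeas b))
  -- lemma A: row sums of m
  have hA : ∀ a, ∑ b, m a b ≤ M * t a := by
    intro a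
    have key : ∑ b, μ (E a ∩ E b) ≤ M * μ (E a) := by
      have h1 : ∀ b : A, μ (E a ∩ E b) = ∫⁻ x, (E a ∩ E b).indicator 1 x ∂μ :=
        fun b => (lintegral_indicator_one ((hEmeas a).inter (hEmeas b))).symm
      calc ∑ b, μ (E a ∩ E b) = ∫⁻ x, ∑ b, (E a ∩ E b).indicator 1 x ∂μ := by
            rw [lintegral_finset_sum]
            · exact Finset.sum_congr rfl fun b _ => h1 b
            · exact fun b _ => measurable_one.indicator ((hEmeas a).inter (hEmeas b))
        _ ≤ ∫⁻ x, (M : ENNReal) * (E a).indicator 1 x ∂μ := by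
            apply lintegral_mono_ae
            filter_upwards [hcount] with x hx
            by_cases hxa : x ∈ E a
            · have : ∀ b : A, (E a ∩ E b).indicator (1 : X → ENNReal) x =
                  if x ∈ E b then 1 else 0 := by
                intro b
                by_cases hxb : x ∈ E b <;>
                  simp [Set.indicator_apply, Set.mem_inter_iff, hxa, hxb]
              rw [Set.indicator_of_mem hxa]
              simp only [this, Finset.sum_boole, Pi.one_apply, mul_one]
              exact_mod_cast Nat.cast_le.mpr hx
            · simp only [Set.indicator_of_notMem hxa]
              have : ∀ b : A, (E a ∩ E b).indicator (1 : X → ENNReal) x = 0 := fun b =>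
                Set.indicator_of_notMem (fun h => hxa h.1) _
              simp [this]
        _ = (M : ENNReal) * μ (E a) := by
            rw [lintegral_const_mul _ (measurable_one.indicator (hEmeas a)),
              lintegral_indicator_one (hEmeas a)]
    have hfin : (M : ENNReal) * μ (E a) ≠ ⊤ :=
      ENNReal.mul_ne_top (ENNReal.natCast_ne_top M) (hEfin a).ne
    have h2 := ENNReal.toReal_mono hfin key
    rw [ENNReal.toReal_sum (fun b _ => (lt_of_le_of_lt (measure_mono Set.inter_subset_left) (hEfin a)).ne),
      ENNReal.toReal_mul, ENNReal.toReal_natCast] at h2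
    simpa [hm, ht] using h2
  -- lemma B
  have hB2 : ∑ a, I a ≤ M * ∫ x, ((φ : X → ℝ) x) ^ 2 ∂μ := by
    have h1 : ∀ a : A, I a = ∫ x, (E a).indicator (fun x => ((φ : X → ℝ) x) ^ 2) x ∂μ :=
      fun a => (integral_indicator (hEmeas a)).symm
    calc ∑ a, I a = ∫ x, ∑ a, (E a).indicator (fun x => ((φ : X → ℝ) x) ^ 2) x ∂μ := by
          rw [integral_finset_sum]
          · exact Finset.sum_congr rfl fun a _ => h1 a
          · exact fun a _ => hφsq_int.indicator (hEmeas a)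
      _ ≤ ∫ x, (M : ℝ) * ((φ : X → ℝ) x) ^ 2 ∂μ := by
          apply integral_mono_ae
            (integrable_finset_sum _ fun a _ => hφsq_int.indicator (hEmeas a))
            (hφsq_int.const_mul _)
          filter_upwards [hcount] with x hx
          have : ∑ a, (E a).indicator (fun x => ((φ : X → ℝ) x) ^ 2) x =
              ((Finset.univ.filter (fun a => x ∈ E a)).card : ℝ) * ((φ : X → ℝ) x) ^ 2 := by
            simp [Set.indicator_apply, Finset.sum_ite, Finset.sum_const, nsmul_eq_mul]
          rw [this]
          apply mul_le_mul_of_nonneg_right _ (sq_nonneg _)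
          exact_mod_cast hx
      _ = (M : ℝ) * ∫ x, ((φ : X → ℝ) x) ^ 2 ∂μ := integral_const_mul _ _
  -- norm identity for φ
  have hφnorm : ∫ x, ((φ : X → ℝ) x) ^ 2 ∂μ = ‖φ‖ ^ 2 := by
    have := real_inner_self_eq_norm_sq φ
    rw [L2.inner_def] at this
    simpa [pow_two] using this
  -- main estimate on the square
  have hmain : ‖∑ a : A, l a • B a‖ ^ 2 ≤ (c * M * ‖φ‖) ^ 2 := by
    have hexp : ‖∑ a : A, l a • B a‖ ^ 2 =
        ∑ a, ∑ b, l a * l b * (inner ℝ (B a) (B b) : ℝ) := by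
      rw [← real_inner_self_eq_norm_sq, sum_inner]
      refine Finset.sum_congr rfl fun a _ => ?_
      rw [inner_sum]
      refine Finset.sum_congr rfl fun b _ => ?_
      rw [real_inner_smul_left, real_inner_smul_right]
      ring
    rw [hexp]
    have step1 : ∑ a, ∑ b, l a * l b * (inner ℝ (B a) (B b) : ℝ) ≤
        ∑ a, ∑ b, ((l a) ^ 2 + (l b) ^ 2) / 2 * m a b := by
      refine Finset.sum_le_sum fun a _ => Finset.sum_le_sum fun b _ => ?_
      calc l a * l b * (inner ℝ (B a) (B b) : ℝ)
          ≤ |l a * l b * (inner ℝ (B a) (B b) : ℝ)| := le_abs_self _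
        _ = |l a| * |l b| * |(inner ℝ (B a) (B b) : ℝ)| := by rw [abs_mul, abs_mul]
        _ ≤ |l a| * |l b| * m a b :=
            mul_le_mul_of_nonneg_left (hinner a b) (by positivity)
        _ ≤ ((l a) ^ 2 + (l b) ^ 2) / 2 * m a b := by
            apply mul_le_mul_of_nonneg_right _ ENNReal.toReal_nonneg
            nlinarith [sq_nonneg (|l a| - |l b|), sq_abs (l a), sq_abs (l b)]
    have step2 : ∑ a, ∑ b, ((l a) ^ 2 + (l b) ^ 2) / 2 * m a b =
        ∑ a, ∑ b, (l a) ^ 2 * m a b := by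
      have hsym : ∀ a b, m a b = m b a := fun a b => by
        simp [hm, Set.inter_comm]
      have : ∑ a, ∑ b, (l b) ^ 2 * m a b = ∑ a, ∑ b, (l a) ^ 2 * m a b := by
        rw [Finset.sum_comm]
        exact Finset.sum_congr rfl fun a _ => Finset.sum_congr rfl fun b _ => by
          rw [hsym b a]
      have expand : ∀ a b : A, ((l a) ^ 2 + (l b) ^ 2) / 2 * m a b =
          (l a) ^ 2 * m a b / 2 + (l b) ^ 2 * m a b / 2 := fun a b => by ring
      have h3 : ∑ a, ∑ b, (l b) ^ 2 * m a b / 2 = ∑ a, ∑ b, (l a) ^ 2 * m a b / 2 := by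
        rw [Finset.sum_comm]
        exact Finset.sum_congr rfl fun a _ => Finset.sum_congr rfl fun b _ => by rw [hsym b a]
      calc ∑ a, ∑ b, ((l a) ^ 2 + (l b) ^ 2) / 2 * m a b
          = ∑ a, ∑ b, ((l a) ^ 2 * m a b / 2 + (l b) ^ 2 * m a b / 2) := by
            simp only [expand]
        _ = ∑ a, (∑ b, (l a) ^ 2 * m a b / 2) + ∑ a, ∑ b, (l b) ^ 2 * m a b / 2 := by
            simp only [Finset.sum_add_distrib]
        _ = ∑ a, ∑ b, (l a) ^ 2 * m a b := by
            rw [h3, ← Finset.sum_add_distrib]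
            refine Finset.sum_congr rfl fun a _ => ?_
            rw [← Finset.sum_add_distrib]
            exact Finset.sum_congr rfl fun b _ => by ring
    have step3 : ∑ a, ∑ b, (l a) ^ 2 * m a b ≤ ∑ a, (l a) ^ 2 * (M * t a) := by
      refine Finset.sum_le_sum fun a _ => ?_
      rw [← Finset.mul_sum]
      exact mul_le_mul_of_nonneg_left (hA a) (sq_nonneg _)
    have step4 : ∑ a, (l a) ^ 2 * (M * t a) ≤ ∑ a, (c ^ 2 * (t a)⁻¹ * I a) * (M * t a) := by
      refine Finset.sum_le_sum fun a _ => ?_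
      exact mul_le_mul_of_nonneg_right (hlsq a) (by positivity)
    have step5 : ∑ a, (c ^ 2 * (t a)⁻¹ * I a) * (M * t a) = c ^ 2 * M * ∑ a, I a := by
      rw [Finset.mul_sum]
      refine Finset.sum_congr rfl fun a _ => ?_
      rw [show (c ^ 2 * (t a)⁻¹ * I a) * (↑M * t a) = c ^ 2 * ↑M * I a * ((t a)⁻¹ * t a) by
        ring, inv_mul_cancel₀ (htpos a).ne', mul_one]
    have step6 : c ^ 2 * M * ∑ a, I a ≤ c ^ 2 * M * (M * ∫ x, ((φ : X → ℝ) x) ^ 2 ∂μ) :=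
      mul_le_mul_of_nonneg_left hB2 (by positivity)
    calc ∑ a, ∑ b, l a * l b * (inner ℝ (B a) (B b) : ℝ)
        ≤ c ^ 2 * M * (M * ∫ x, ((φ : X → ℝ) x) ^ 2 ∂μ) := by
          refine le_trans step1 ?_
          rw [step2]
          exact le_trans step3 (le_trans step4 (step5 ▸ step6))
      _ = (c * M * ‖φ‖) ^ 2 := by rw [hφnorm]; ring
  have hrhs : 0 ≤ c * M * ‖φ‖ := by positivity
  calc ‖∑ a : A, Λ a φ • B a‖ = Real.sqrt (‖∑ a : A, l a • B a‖ ^ 2) := by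
        rw [Real.sqrt_sq (norm_nonneg _)]
    _ ≤ Real.sqrt ((c * M * ‖φ‖) ^ 2) := Real.sqrt_le_sqrt hmain
    _ = c * M * ‖φ‖ := Real.sqrt_sq hrhs
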